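/- For any real K ∈ (0,2), the equation Φ⁻¹(1 − 1/x) − √(K log x) = 0 has a unique solution x₀ > 1, and Φ⁻¹(1 − 1/x) − √(K log x) > 0 for every x > x₀. -/

import Mathlib

open Real

/-- The standard normal distribution function. -/
noncomputable def stdNormalCDF (x : ℝ) : ℝ :=
  (Real.sqrt (2 * Real.pi))⁻¹ * ∫ t in Set.Iic x, Real.exp (-t ^ 2 / 2)

section Aux
open MeasureTheory Set Filter

/-- The Gaussian tail function. -/
noncomputable def QQ (t : ℝ) : ℝ :=
  (Real.sqrt (2 * Real.pi))⁻¹ * ∫ u in Set.Ioi t, Real.exp (-u ^ 2 / 2)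

lemma gauss_integrable : Integrable (fun t : ℝ => Real.exp (-t ^ 2 / 2)) := by
  have h := integrable_exp_neg_mul_sq (b := (1:ℝ)/2) (by norm_num)
  refine h.congr (Filter.Eventually.of_forall fun x => ?_)
  ring_nf

lemma gauss_total : ∫ t : ℝ, Real.exp (-t ^ 2 / 2) = Real.sqrt (2 * Real.pi) := by
  have h := integral_gaussian (1/2 : ℝ)
  have : (fun t : ℝ => Real.exp (-t ^ 2 / 2)) = fun t : ℝ => Real.exp (-(1/2) * t ^ 2) := by
    funext t; ring_nf
  rw [this, h]; rw [show Real.pi / (1/2) = 2 * Real.pi by ring]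

lemma sqrt_two_pi_pos : 0 < Real.sqrt (2 * Real.pi) :=
  Real.sqrt_pos.mpr (by positivity)

lemma Phi_add_QQ (t : ℝ) : stdNormalCDF t + QQ t = 1 := by
  have h := intervalIntegral.integral_Iic_add_Ioi (f := fun u : ℝ => Real.exp (-u ^ 2 / 2))
    (b := t) (μ := volume) gauss_integrable.integrableOn gauss_integrable.integrableOn
  rw [stdNormalCDF, QQ, ← mul_add, h, gauss_total,
    inv_mul_cancel₀ (ne_of_gt sqrt_two_pi_pos)]

lemma Phi_strictMono : StrictMono stdNormalCDF := by
  intro x y hxy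
  have h := intervalIntegral.integral_Iic_sub_Iic (f := fun u : ℝ => Real.exp (-u ^ 2 / 2))
    (a := x) (b := y) (μ := volume) gauss_integrable.integrableOn gauss_integrable.integrableOn
  have hpos : 0 < ∫ u in x..y, Real.exp (-u ^ 2 / 2) :=
    intervalIntegral.intervalIntegral_pos_of_pos_on
      (gauss_integrable.intervalIntegrable) (fun u _ => Real.exp_pos _) hxy
  have : stdNormalCDF y - stdNormalCDF x > 0 := by
    rw [stdNormalCDF, stdNormalCDF, ← mul_sub, h]
    positivity
  linarith

lemma hasDerivAt_Phi (x : ℝ) :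
    HasDerivAt stdNormalCDF ((Real.sqrt (2 * Real.pi))⁻¹ * Real.exp (-x ^ 2 / 2)) x := by
  have hcont : Continuous fun t : ℝ => Real.exp (-t ^ 2 / 2) := by continuity
  have heq : stdNormalCDF = fun y =>
      (Real.sqrt (2 * Real.pi))⁻¹ * ((∫ t in Set.Iic (0:ℝ), Real.exp (-t ^ 2 / 2))
        + ∫ t in (0:ℝ)..y, Real.exp (-t ^ 2 / 2)) := by
    funext y
    rw [stdNormalCDF, ← intervalIntegral.integral_Iic_sub_Iic
      gauss_integrable.integrableOn gauss_integrable.integrableOn]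
    ring
  rw [heq]
  have hd : HasDerivAt (fun y => ∫ t in (0:ℝ)..y, Real.exp (-t ^ 2 / 2))
      (Real.exp (-x ^ 2 / 2)) x :=
    intervalIntegral.integral_hasDerivAt_right
      (hcont.intervalIntegrable _ _)
      (hcont.stronglyMeasurableAtFilter _ _) hcont.continuousAt
  simpa using ((hasDerivAt_const x _).add hd).const_mul ((Real.sqrt (2 * Real.pi))⁻¹)

lemma Phi_continuous : Continuous stdNormalCDF :=
  continuous_iff_continuousAt.mpr fun x => (hasDerivAt_Phi x).continuousAt

lemma QQ_eq (t : ℝ) : QQ t = 1 - stdNormalCDF t := by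
  have := Phi_add_QQ t; linarith

lemma hasDerivAt_QQ (t : ℝ) :
    HasDerivAt QQ (-((Real.sqrt (2 * Real.pi))⁻¹ * Real.exp (-t ^ 2 / 2))) t := by
  have : QQ = fun y => 1 - stdNormalCDF y := funext QQ_eq
  rw [this]
  exact ((hasDerivAt_const t (1:ℝ)).sub (hasDerivAt_Phi t)).congr_deriv (by ring)

lemma shift_Ioi (t : ℝ) :
    ∫ u in Set.Ioi t, Real.exp (-(u - t) ^ 2 / 2) = ∫ v in Set.Ioi (0:ℝ), Real.exp (-v ^ 2 / 2) := by
  have hmp : MeasurePreserving (fun x : ℝ => x + t) volume volume :=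
    measurePreserving_add_right volume t
  have hme : MeasurableEmbedding (fun x : ℝ => x + t) :=
    (MeasurableEquiv.addRight t).measurableEmbedding
  have h := hmp.setIntegral_preimage_emb hme (fun u => Real.exp (-(u - t) ^ 2 / 2)) (Set.Ioi t)
  have hpre : (fun x : ℝ => x + t) ⁻¹' Set.Ioi t = Set.Ioi 0 := by
    ext x; simp [Set.mem_Ioi]
  rw [hpre] at h
  rw [← h]
  congr 1; funext x; ring_nf

lemma QQ_le {t : ℝ} (ht : 0 ≤ t) : QQ t ≤ Real.exp (-t ^ 2 / 2) / 2 := by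
  have hint : ∫ u in Set.Ioi t, Real.exp (-u ^ 2 / 2)
      ≤ Real.exp (-t ^ 2 / 2) * (Real.sqrt (2 * Real.pi) / 2) := by
    have hle : ∀ u ∈ Set.Ioi t, Real.exp (-u ^ 2 / 2)
        ≤ Real.exp (-t ^ 2 / 2) * Real.exp (-(u - t) ^ 2 / 2) := by
      intro u hu
      rw [← Real.exp_add]
      apply Real.exp_le_exp.mpr
      have : t ≤ u := le_of_lt hu
      nlinarith [mul_nonneg ht (sub_nonneg.mpr this)]
    have hintg2 : IntegrableOn (fun u => Real.exp (-t ^ 2 / 2) * Real.exp (-(u - t) ^ 2 / 2))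
        (Set.Ioi t) := by
      exact ((gauss_integrable.comp_sub_right t).const_mul _).integrableOn
    calc ∫ u in Set.Ioi t, Real.exp (-u ^ 2 / 2)
        ≤ ∫ u in Set.Ioi t, Real.exp (-t ^ 2 / 2) * Real.exp (-(u - t) ^ 2 / 2) :=
          setIntegral_mono_on gauss_integrable.integrableOn hintg2 measurableSet_Ioi hle
      _ = Real.exp (-t ^ 2 / 2) * ∫ u in Set.Ioi t, Real.exp (-(u - t) ^ 2 / 2) := by
          rw [integral_const_mul]
      _ = Real.exp (-t ^ 2 / 2) * (Real.sqrt (2 * Real.pi) / 2) := by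
          rw [shift_Ioi]
          congr 1
          have h := integral_gaussian_Ioi (1/2 : ℝ)
          have heq : (fun v : ℝ => Real.exp (-v ^ 2 / 2)) = fun v : ℝ => Real.exp (-(1/2) * v ^ 2) := by
            funext v; ring_nf
          rw [heq, h, show Real.pi / (1/2) = 2 * Real.pi by ring]
  rw [QQ]
  rw [inv_mul_le_iff₀ sqrt_two_pi_pos]
  calc ∫ u in Set.Ioi t, Real.exp (-u ^ 2 / 2)
      ≤ Real.exp (-t ^ 2 / 2) * (Real.sqrt (2 * Real.pi) / 2) := hint
    _ ≤ Real.sqrt (2 * Real.pi) * (Real.exp (-t ^ 2 / 2) / 2) := by ring_nf; linarith []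

lemma mills_aux (u : ℝ) :
    HasDerivAt (fun v : ℝ => -(v / (v ^ 2 + 1) * Real.exp (-v ^ 2 / 2)))
      ((1 - 2 / (u ^ 2 + 1) ^ 2) * Real.exp (-u ^ 2 / 2)) u := by
  have hne : u ^ 2 + 1 ≠ 0 := by positivity
  have h1 : HasDerivAt (fun v : ℝ => v / (v ^ 2 + 1))
      ((1 * (u ^ 2 + 1) - u * (2 * u)) / (u ^ 2 + 1) ^ 2) u := by
    have := (hasDerivAt_id u).div ((hasDerivAt_pow 2 u).add_const 1) hne
    exact this.congr_deriv (by norm_num)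
  have h2 : HasDerivAt (fun v : ℝ => Real.exp (-v ^ 2 / 2))
      (Real.exp (-u ^ 2 / 2) * (-u)) u := by
    have hin : HasDerivAt (fun v : ℝ => -v ^ 2 / 2) (-u) u := by
      have := ((hasDerivAt_pow 2 u).neg).div_const 2
      simpa using this.congr_deriv (by push_cast; ring)
    exact (Real.hasDerivAt_exp (-u ^ 2 / 2)).comp u hin
  have : HasDerivAt (fun v : ℝ => -(v / (v ^ 2 + 1) * Real.exp (-v ^ 2 / 2))) _ u := ((h1.mul h2).neg)
  convert this using 1
  field_simp
  ring

lemma mills_F'_integrable (t : ℝ) :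
    IntegrableOn (fun u : ℝ => (1 - 2 / (u ^ 2 + 1) ^ 2) * Real.exp (-u ^ 2 / 2)) (Set.Ioi t) := by
  have hcont : Continuous fun u : ℝ => (1 - 2 / (u ^ 2 + 1) ^ 2) * Real.exp (-u ^ 2 / 2) := by
    apply Continuous.mul
    · exact continuous_const.sub (continuous_const.div (by continuity) (fun x => by positivity))
    · continuity
  refine (Integrable.mono' gauss_integrable hcont.aestronglyMeasurable ?_).integrableOn
  filter_upwards with u
  rw [Real.norm_eq_abs, abs_mul, abs_of_pos (Real.exp_pos _)]
  have h1 : 0 < 2 / (u ^ 2 + 1) ^ 2 := by positivity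
  have h2 : 2 / (u ^ 2 + 1) ^ 2 ≤ 2 := by
    rw [div_le_iff₀ (by positivity)]
    nlinarith [sq_nonneg u, sq_nonneg (u^2)]
  have : |1 - 2 / (u ^ 2 + 1) ^ 2| ≤ 1 := by
    rw [abs_le]; constructor <;> linarith
  nlinarith [Real.exp_pos (-u ^ 2 / 2)]

lemma mills_tail_integral (t : ℝ) :
    ∫ u in Set.Ioi t, (1 - 2 / (u ^ 2 + 1) ^ 2) * Real.exp (-u ^ 2 / 2)
      = t / (t ^ 2 + 1) * Real.exp (-t ^ 2 / 2) := by
  have htend : Tendsto (fun v : ℝ => -(v / (v ^ 2 + 1) * Real.exp (-v ^ 2 / 2))) atTop (nhds 0) := by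
    rw [show (0:ℝ) = -0 by ring]
    apply Filter.Tendsto.neg
    apply squeeze_zero' (f := fun v : ℝ => v / (v ^ 2 + 1) * Real.exp (-v ^ 2 / 2))
      (g := fun v : ℝ => v⁻¹)
    · filter_upwards [eventually_gt_atTop (0:ℝ)] with v hv
      positivity
    · filter_upwards [eventually_ge_atTop (1:ℝ)] with v hv
      have hv0 : 0 < v := by linarith
      have h1 : v / (v ^ 2 + 1) ≤ v⁻¹ := by
        rw [div_le_iff₀ (by positivity), inv_mul_eq_div, le_div_iff₀ hv0]
        nlinarith
      have h2 : Real.exp (-v ^ 2 / 2) ≤ 1 := by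
        rw [show (1:ℝ) = Real.exp 0 by simp]
        apply Real.exp_le_exp.mpr; nlinarith
      calc v / (v ^ 2 + 1) * Real.exp (-v ^ 2 / 2) ≤ v / (v ^ 2 + 1) * 1 := by
            apply mul_le_mul_of_nonneg_left h2 (by positivity)
        _ ≤ v⁻¹ := by rwa [mul_one]
    · exact tendsto_inv_atTop_zero
  have h := integral_Ioi_of_hasDerivAt_of_tendsto
    (f := fun v : ℝ => -(v / (v ^ 2 + 1) * Real.exp (-v ^ 2 / 2)))
    (f' := fun u : ℝ => (1 - 2 / (u ^ 2 + 1) ^ 2) * Real.exp (-u ^ 2 / 2))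
    (a := t) (m := 0)
    (mills_aux t).continuousAt.continuousWithinAt
    (fun x _ => mills_aux x) (mills_F'_integrable t) htend
  rw [h]; ring

lemma QQ_gt {t : ℝ} (ht : 0 < t) :
    t / (t ^ 2 + 1) * ((Real.sqrt (2 * Real.pi))⁻¹ * Real.exp (-t ^ 2 / 2)) < QQ t := by
  have key : t / (t ^ 2 + 1) * Real.exp (-t ^ 2 / 2) < ∫ u in Set.Ioi t, Real.exp (-u ^ 2 / 2) := by
    rw [← mills_tail_integral t]
    have hdiff : 0 < ∫ u in Set.Ioi t,
        (Real.exp (-u ^ 2 / 2) - (1 - 2 / (u ^ 2 + 1) ^ 2) * Real.exp (-u ^ 2 / 2)) := by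
      have hpos : ∀ u : ℝ, 0 < Real.exp (-u ^ 2 / 2) - (1 - 2 / (u ^ 2 + 1) ^ 2) * Real.exp (-u ^ 2 / 2) := by
        intro u
        have : Real.exp (-u ^ 2 / 2) - (1 - 2 / (u ^ 2 + 1) ^ 2) * Real.exp (-u ^ 2 / 2)
            = 2 / (u ^ 2 + 1) ^ 2 * Real.exp (-u ^ 2 / 2) := by ring
        rw [this]; positivity
      have hintg : IntegrableOn (fun u : ℝ =>
          Real.exp (-u ^ 2 / 2) - (1 - 2 / (u ^ 2 + 1) ^ 2) * Real.exp (-u ^ 2 / 2)) (Set.Ioi t) :=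
        gauss_integrable.integrableOn.sub (mills_F'_integrable t)
      rw [setIntegral_pos_iff_support_of_nonneg_ae
        (Filter.Eventually.of_forall fun u => (hpos u).le) hintg]
      have : Function.support (fun u : ℝ =>
          Real.exp (-u ^ 2 / 2) - (1 - 2 / (u ^ 2 + 1) ^ 2) * Real.exp (-u ^ 2 / 2)) = Set.univ := by
        ext u; simp [Function.mem_support, (hpos u).ne']
      rw [this, Set.univ_inter, Real.volume_Ioi]
      exact ENNReal.zero_lt_top
    have hsub := integral_sub gauss_integrable.integrableOn (mills_F'_integrable t)
    rw [hsub] at hdiff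
    linarith
  rw [QQ]
  have := mul_lt_mul_of_pos_left key (inv_pos.mpr sqrt_two_pi_pos)
  calc t / (t ^ 2 + 1) * ((Real.sqrt (2 * Real.pi))⁻¹ * Real.exp (-t ^ 2 / 2))
      = (Real.sqrt (2 * Real.pi))⁻¹ * (t / (t ^ 2 + 1) * Real.exp (-t ^ 2 / 2)) := by ring
    _ < _ := this

noncomputable def sK (K x : ℝ) : ℝ := Real.sqrt (K * Real.log x)
noncomputable def psiK (K x : ℝ) : ℝ := x * QQ (sK K x)

lemma log_pos' {x : ℝ} (hx : 1 < x) : 0 < Real.log x := Real.log_pos hx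

lemma sK_sq {K x : ℝ} (hK : 0 < K) (hx : 1 < x) : (sK K x) ^ 2 = K * Real.log x := by
  have hlog : 0 < Real.log x := Real.log_pos hx
  rw [sK, Real.sq_sqrt (by positivity)]

lemma sK_pos {K x : ℝ} (hK : 0 < K) (hx : 1 < x) : 0 < sK K x := by
  have hlog : 0 < Real.log x := Real.log_pos hx
  rw [sK]; positivity

lemma hasDerivAt_psiK {K x : ℝ} (hK : 0 < K) (hx : 1 < x) :
    HasDerivAt (psiK K)
      (QQ (sK K x) - K / (2 * sK K x) * ((Real.sqrt (2 * Real.pi))⁻¹ * Real.exp (-(sK K x) ^ 2 / 2))) x := by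
  have hx0 : x ≠ 0 := by linarith
  have hlog : 0 < Real.log x := Real.log_pos hx
  have hKlog : K * Real.log x ≠ 0 := by positivity
  have hs : 0 < sK K x := sK_pos hK hx
  have h1 : HasDerivAt (fun y : ℝ => K * Real.log y) (K * x⁻¹) x :=
    (Real.hasDerivAt_log hx0).const_mul K
  have h2 : HasDerivAt (fun y : ℝ => sK K y) (1 / (2 * sK K x) * (K * x⁻¹)) x := by
    have := (Real.hasDerivAt_sqrt hKlog).comp x h1
    exact this
  have h3 : HasDerivAt (fun y : ℝ => QQ (sK K y))
      (-((Real.sqrt (2 * Real.pi))⁻¹ * Real.exp (-(sK K x) ^ 2 / 2)) * (1 / (2 * sK K x) * (K * x⁻¹))) x :=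
    (hasDerivAt_QQ (sK K x)).comp x h2
  have h4 : HasDerivAt (fun y : ℝ => y * QQ (sK K y)) (1 * QQ (sK K x) + x * (-((Real.sqrt (2 * Real.pi))⁻¹ * Real.exp (-(sK K x) ^ 2 / 2)) * (1 / (2 * sK K x) * (K * x⁻¹)))) x := (hasDerivAt_id x).mul h3
  have : psiK K = fun y => y * QQ (sK K y) := rfl
  rw [this]
  convert h4 using 1
  field_simp
  ring

lemma psiK_deriv_pos {K x : ℝ} (hK : 0 < K) (hK2 : K < 2)
    (hx : Real.exp (1 / (2 - K)) ≤ x) : 0 < deriv (psiK K) x := by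
  have ha1 : (1:ℝ) < Real.exp (1 / (2 - K)) := by
    rw [show (1:ℝ) = Real.exp 0 by simp]
    apply Real.exp_lt_exp.mpr
    have : 0 < 2 - K := by linarith
    positivity
  have hx1 : 1 < x := lt_of_lt_of_le ha1 hx
  have hlog : 1 / (2 - K) ≤ Real.log x := by
    rw [← Real.log_exp (1 / (2 - K))]
    exact Real.log_le_log (Real.exp_pos _) hx
  rw [(hasDerivAt_psiK hK hx1).deriv]
  set t := sK K x with ht
  have hts : 0 < t := sK_pos hK hx1
  have htsq : t ^ 2 = K * Real.log x := sK_sq hK hx1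
  have hmain : K / (2 * t) * ((Real.sqrt (2 * Real.pi))⁻¹ * Real.exp (-t ^ 2 / 2))
      ≤ t / (t ^ 2 + 1) * ((Real.sqrt (2 * Real.pi))⁻¹ * Real.exp (-t ^ 2 / 2)) := by
    apply mul_le_mul_of_nonneg_right _ (by positivity)
    rw [div_le_div_iff₀ (by positivity) (by positivity)]
    have h1 : K ≤ (2 - K) * t ^ 2 := by
      rw [htsq]
      have : (2 - K) * (1 / (2 - K)) ≤ (2 - K) * Real.log x :=
        mul_le_mul_of_nonneg_left hlog (by linarith)
      rw [mul_one_div, div_self (by linarith : (2:ℝ) - K ≠ 0)] at this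
      nlinarith
    nlinarith [sq_nonneg t]
  have := QQ_gt hts
  linarith

lemma psiK_strictMonoOn {K : ℝ} (hK : 0 < K) (hK2 : K < 2) :
    StrictMonoOn (psiK K) (Set.Ici (Real.exp (1 / (2 - K)))) := by
  have ha1 : (1:ℝ) < Real.exp (1 / (2 - K)) := by
    rw [show (1:ℝ) = Real.exp 0 by simp]
    apply Real.exp_lt_exp.mpr
    have : 0 < 2 - K := by linarith
    positivity
  apply strictMonoOn_of_deriv_pos (convex_Ici _)
  · intro x hx
    have hx1 : 1 < x := lt_of_lt_of_le ha1 hx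
    exact (hasDerivAt_psiK hK hx1).continuousAt.continuousWithinAt
  · intro x hx
    rw [interior_Ici] at hx
    exact psiK_deriv_pos hK hK2 (le_of_lt hx)

lemma psiK_lt_one {K x : ℝ} (hK : 0 < K) (hK2 : K < 2) (hx : 1 < x)
    (hxa : x ≤ Real.exp (1 / (2 - K))) : psiK K x < 1 := by
  have hlog : 0 < Real.log x := Real.log_pos hx
  have hx0 : 0 < x := by linarith
  have htsq : (sK K x) ^ 2 = K * Real.log x := sK_sq hK hx
  have h1 : psiK K x ≤ x * (Real.exp (-(sK K x) ^ 2 / 2) / 2) := by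
    rw [psiK]
    exact mul_le_mul_of_nonneg_left (QQ_le (sK_pos hK hx).le) hx0.le
  have h2 : x * Real.exp (-(sK K x) ^ 2 / 2) = Real.exp ((1 - K / 2) * Real.log x) := by
    rw [htsq, ← Real.exp_log hx0, ← Real.exp_add]
    congr 1
    rw [Real.log_exp]
    ring
  have hloga : Real.log x ≤ 1 / (2 - K) := by
    rw [← Real.log_exp (1 / (2 - K))]
    exact Real.log_le_log hx0 hxa
  have h3 : (1 - K / 2) * Real.log x ≤ 1 / 2 := by
    have hc : 0 < 1 - K / 2 := by linarith
    have := mul_le_mul_of_nonneg_left hloga hc.le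
    have heq : (1 - K / 2) * (1 / (2 - K)) = 1 / 2 := by
      have h2K : (2:ℝ) - K ≠ 0 := by linarith
      field_simp
    linarith [heq ▸ this]
  have h4 : Real.exp ((1 - K / 2) * Real.log x) ≤ Real.exp (1 / 2) := Real.exp_le_exp.mpr h3
  have h5 : Real.exp (1 / 2) < 2 := by
    have h := Real.exp_lt_exp.mpr (show (1:ℝ)/2 < Real.log 2 by linarith [Real.log_two_gt_d9])
    rwa [Real.exp_log two_pos] at h
  calc psiK K x ≤ x * Real.exp (-(sK K x) ^ 2 / 2) / 2 := by linarith [h1]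
    _ = Real.exp ((1 - K / 2) * Real.log x) / 2 := by rw [← h2]
    _ < 1 := by linarith

lemma psiK_exists_gt {K : ℝ} (hK : 0 < K) (hK2 : K < 2) :
    ∃ b : ℝ, Real.exp (1 / (2 - K)) < b ∧ 1 < psiK K b := by
  set δ : ℝ := (2 - K) / 2 with hδdef
  have hδ : 0 < δ := by rw [hδdef]; linarith
  set C : ℝ := Real.sqrt (2 * Real.pi) * (K + 1) with hCdef
  have hC : 0 < C := by
    have := sqrt_two_pi_pos
    rw [hCdef]; positivity
  have h0 : Tendsto (fun z : ℝ => Real.exp z / z) atTop atTop := by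
    simpa using tendsto_exp_div_pow_atTop 1
  have hδy : Tendsto (fun y : ℝ => δ * y) atTop atTop :=
    Tendsto.const_mul_atTop hδ tendsto_id
  have h1 : Tendsto (fun y : ℝ => Real.exp (δ * y) / (δ * y)) atTop atTop := h0.comp hδy
  have h2 : Tendsto (fun y : ℝ => (δ / C) * (Real.exp (δ * y) / (δ * y))) atTop atTop :=
    Tendsto.const_mul_atTop (by positivity) h1
  have h3 : Tendsto (fun y : ℝ => Real.exp (δ * y) / (C * y)) atTop atTop := by
    apply h2.congr'
    filter_upwards [eventually_gt_atTop (0:ℝ)] with y hy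
    field_simp
  have h4 : Tendsto (fun x : ℝ => Real.exp (δ * Real.log x) / (C * Real.log x)) atTop atTop :=
    h3.comp Real.tendsto_log_atTop
  have hev : ∀ᶠ b in (atTop : Filter ℝ),
      1 < Real.exp (δ * Real.log b) / (C * Real.log b) ∧ 1 / K ≤ Real.log b ∧
      4 * K ≤ Real.log b ∧ Real.exp (1 / (2 - K)) < b := by
    filter_upwards [h4.eventually_gt_atTop 1,
      Real.tendsto_log_atTop.eventually_ge_atTop (1 / K),
      Real.tendsto_log_atTop.eventually_ge_atTop (4 * K),
      eventually_gt_atTop (Real.exp (1 / (2 - K)))] with b hb1 hb2 hb3 hb4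
    exact ⟨hb1, hb2, hb3, hb4⟩
  obtain ⟨b, hb1, hb2, hb3, hb4⟩ := hev.exists
  refine ⟨b, hb4, ?_⟩
  have ha1 : (1:ℝ) < Real.exp (1 / (2 - K)) := by
    rw [show (1:ℝ) = Real.exp 0 by simp]
    apply Real.exp_lt_exp.mpr
    have : 0 < 2 - K := by linarith
    positivity
  have hb1' : 1 < b := lt_trans ha1 hb4
  have hb0 : 0 < b := by linarith
  set L : ℝ := Real.log b with hLdef
  have hL : 0 < L := Real.log_pos hb1'
  have hKL : 1 ≤ K * L := by
    rw [div_le_iff₀ hK] at hb2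
    nlinarith
  set t : ℝ := sK K b with htdef
  have ht0 : 0 < t := sK_pos hK hb1'
  have htsq : t ^ 2 = K * L := sK_sq hK hb1'
  have ht1 : 1 ≤ t := by nlinarith
  have ht2K : 2 * K ≤ t := by nlinarith
  -- key comparison
  have hbE : b * Real.exp (-t ^ 2 / 2) = Real.exp (δ * L) := by
    rw [htsq, ← Real.exp_log hb0, ← Real.exp_add]
    congr 1
    rw [hδdef, ← hLdef]
    ring
  have hfrac : 1 / ((K + 1) * L) ≤ t / (t ^ 2 + 1) := by
    rw [div_le_div_iff₀ (by positivity) (by positivity), htsq]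
    have h5 : K * L + 1 ≤ 2 * (K * L) := by linarith
    nlinarith
  have hstep2 : Real.exp (δ * L) / (C * L)
      ≤ b * (t / (t ^ 2 + 1) * ((Real.sqrt (2 * Real.pi))⁻¹ * Real.exp (-t ^ 2 / 2))) := by
    have e1 : b * (t / (t ^ 2 + 1) * ((Real.sqrt (2 * Real.pi))⁻¹ * Real.exp (-t ^ 2 / 2)))
        = (b * Real.exp (-t ^ 2 / 2)) * (t / (t ^ 2 + 1)) * (Real.sqrt (2 * Real.pi))⁻¹ := by ring
    rw [e1, hbE]
    have e2 : Real.exp (δ * L) / (C * L)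
        = Real.exp (δ * L) * (1 / ((K + 1) * L)) * (Real.sqrt (2 * Real.pi))⁻¹ := by
      rw [hCdef]
      field_simp
    rw [e2]
    apply mul_le_mul_of_nonneg_right _ (by positivity)
    exact mul_le_mul_of_nonneg_left hfrac (Real.exp_pos _).le
  have hstep3 : b * (t / (t ^ 2 + 1) * ((Real.sqrt (2 * Real.pi))⁻¹ * Real.exp (-t ^ 2 / 2)))
      < psiK K b := by
    rw [psiK, ← htdef]
    exact mul_lt_mul_of_pos_left (QQ_gt ht0) hb0
  linarith

end Aux

/-- For `K ∈ (0,2)`, the equation `Φ⁻¹(1 − 1/x) = √(K log x)` has a unique solution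
`x₀ > 1`, and `Φ⁻¹(1 − 1/x) − √(K log x) > 0` for every `x > x₀`.
Here `g x` denotes `Φ⁻¹(1 − 1/x)` for `x > 1`. -/
theorem unique_crossing (K : ℝ) (hK₀ : 0 < K) (hK₂ : K < 2)
    (g : ℝ → ℝ) (hg : ∀ x : ℝ, 1 < x → stdNormalCDF (g x) = 1 - 1 / x) :
    ∃ x₀ : ℝ, 1 < x₀ ∧ g x₀ - Real.sqrt (K * Real.log x₀) = 0 ∧
      (∀ x : ℝ, 1 < x → g x - Real.sqrt (K * Real.log x) = 0 → x = x₀) ∧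
      (∀ x : ℝ, x₀ < x → g x - Real.sqrt (K * Real.log x) > 0) := by
  set a : ℝ := Real.exp (1 / (2 - K)) with hadef
  have ha1 : (1:ℝ) < a := by
    rw [hadef, show (1:ℝ) = Real.exp 0 by simp]
    apply Real.exp_lt_exp.mpr
    have : 0 < 2 - K := by linarith
    positivity
  -- bridging equivalences
  have keyeq : ∀ x : ℝ, 1 < x →
      (g x - Real.sqrt (K * Real.log x) = 0 ↔ psiK K x = 1) := by
    intro x hx
    have hx0 : (0:ℝ) < x := by linarith
    have hgx := hg x hx
    have hQ := Phi_add_QQ (sK K x)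
    rw [sub_eq_zero]
    rw [show Real.sqrt (K * Real.log x) = sK K x from rfl]
    constructor
    · intro h
      have : stdNormalCDF (g x) = stdNormalCDF (sK K x) := by rw [h]
      rw [hgx] at this
      have hQs : QQ (sK K x) = 1 / x := by linarith
      rw [psiK, hQs]
      field_simp
    · intro h
      have hQs : QQ (sK K x) = 1 / x := by
        rw [psiK] at h
        rw [eq_div_iff hx0.ne', mul_comm]
        exact h
      apply Phi_strictMono.injective
      rw [hgx]
      linarith
  have keygt : ∀ x : ℝ, 1 < x →
      (0 < g x - Real.sqrt (K * Real.log x) ↔ 1 < psiK K x) := by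
    intro x hx
    have hx0 : (0:ℝ) < x := by linarith
    have hgx := hg x hx
    have hQ := Phi_add_QQ (sK K x)
    rw [sub_pos]
    rw [show Real.sqrt (K * Real.log x) = sK K x from rfl]
    rw [← Phi_strictMono.lt_iff_lt, hgx]
    rw [psiK]
    constructor
    · intro h
      have hQs : 1 / x < QQ (sK K x) := by linarith
      calc (1:ℝ) = x * (1 / x) := by field_simp
        _ < x * QQ (sK K x) := by exact mul_lt_mul_of_pos_left hQs hx0
    · intro h
      have hQs : 1 / x < QQ (sK K x) := by
        rw [div_lt_iff₀ hx0, mul_comm]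
        linarith
      linarith
  -- IVT setup
  obtain ⟨b, hab, hψb⟩ := psiK_exists_gt hK₀ hK₂
  have hψa : psiK K a < 1 := psiK_lt_one hK₀ hK₂ ha1 le_rfl
  have hcont : ContinuousOn (psiK K) (Set.Icc a b) := by
    intro x hx
    have hx1 : 1 < x := lt_of_lt_of_le ha1 hx.1
    exact (hasDerivAt_psiK hK₀ hx1).continuousAt.continuousWithinAt
  have hIVT := intermediate_value_Icc (le_of_lt hab) hcont
  have h1mem : (1:ℝ) ∈ Set.Icc (psiK K a) (psiK K b) := ⟨hψa.le, hψb.le⟩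
  obtain ⟨x₀, hx₀mem, hψx₀⟩ := hIVT h1mem
  have hax₀ : a ≤ x₀ := hx₀mem.1
  have hx₀1 : 1 < x₀ := lt_of_lt_of_le ha1 hax₀
  refine ⟨x₀, hx₀1, (keyeq x₀ hx₀1).mpr hψx₀, ?_, ?_⟩
  · -- uniqueness
    intro x hx hfx
    have hψx : psiK K x = 1 := (keyeq x hx).mp hfx
    by_cases hxa : x ≤ a
    · exact absurd hψx (ne_of_lt (psiK_lt_one hK₀ hK₂ hx hxa))
    · push_neg at hxa
      exact (psiK_strictMonoOn hK₀ hK₂).injOn hxa.le hax₀ (by rw [hψx, hψx₀])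
  · -- beyond x₀
    intro x hx
    have hx1 : 1 < x := lt_trans hx₀1 hx
    apply (keygt x hx1).mpr
    have := (psiK_strictMonoOn hK₀ hK₂) hax₀ (le_trans hax₀ (le_of_lt hx)) hx
    rw [hψx₀] at this
    exact this
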